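/- Let χ : [0,1] → ℝ be continuously differentiable and suppose there exists c > 0 with χ(x) ≥ c for all x ∈ [0,1]. Let λ > 0 be such that λ·∫₀¹ x·χ(x)·v(x)² dx ≤ ∫₀¹ x·χ(x)·(v'(x))² dx for every continuously differentiable v : [0,1] → ℝ with v(1) = 0. Let α > 0, let g : [0,1] → ℝ be continuous, and let p, T : [0,1] → ℝ be twice continuously differentiable with p(1) = 0 and T(1) = 0, satisfying for all x ∈ [0,1] the identity α⁻¹·p(x)·x − (d/dx)(x·χ(x)·p'(x)) = (d/dx)(x·χ(x)·T'(x)) − g(x)·x. Define u(x) = −α⁻¹·p(x). Then √(∫₀¹ u(x)²·x dx) ≤ √( ∫₀¹ g(x)²·x dx + α⁻¹·∫₀¹ χ(x)·(T'(x))²·x dx ). -/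

import Mathlib

open Set MeasureTheory intervalIntegral

/-- L²(x dx)-norm bound on the optimal controller u = −α⁻¹p:
‖u‖_{L²ₓ} ≤ √(‖∂ₜT̂ₑ‖²_{L²ₓ} + α⁻¹‖T‖²_{Ḣ¹_{xχ}}). -/
theorem control_norm_bound
    (χ : ℝ → ℝ) (hχ : ContDiffOn ℝ 1 χ (Set.Icc 0 1))
    (c : ℝ) (hc : 0 < c) (hχc : ∀ x ∈ Set.Icc (0:ℝ) 1, c ≤ χ x)
    (lam : ℝ) (hlam : 0 < lam)
    (hpoincare : ∀ v : ℝ → ℝ, ContDiffOn ℝ 1 v (Set.Icc 0 1) → v 1 = 0 →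
      lam * ∫ x in (0:ℝ)..1, x * χ x * (v x) ^ 2
        ≤ ∫ x in (0:ℝ)..1, x * χ x * (deriv v x) ^ 2)
    (α : ℝ) (hα : 0 < α)
    (g : ℝ → ℝ) (hg : ContinuousOn g (Set.Icc 0 1))
    (p T : ℝ → ℝ)
    (hp : ContDiffOn ℝ 2 p (Set.Icc 0 1))
    (hT : ContDiffOn ℝ 2 T (Set.Icc 0 1))
    (hp1 : p 1 = 0) (hT1 : T 1 = 0)
    (heq : ∀ x ∈ Set.Icc (0:ℝ) 1,
      α⁻¹ * p x * x - deriv (fun y => y * χ y * deriv p y) x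
        = deriv (fun y => y * χ y * deriv T y) x - g x * x)
    (u : ℝ → ℝ) (hu : ∀ x, u x = -α⁻¹ * p x) :
    Real.sqrt (∫ x in (0:ℝ)..1, (u x) ^ 2 * x)
      ≤ Real.sqrt ((∫ x in (0:ℝ)..1, (g x) ^ 2 * x)
          + α⁻¹ * (∫ x in (0:ℝ)..1, χ x * (deriv T x) ^ 2 * x)) := by
  have uD : UniqueDiffOn ℝ (Set.Icc (0:ℝ) 1) := uniqueDiffOn_Icc (by norm_num)
  have h1ae : ∀ᵐ x : ℝ ∂volume, x ≠ 1 := by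
    refine MeasureTheory.ae_iff.2 ?_
    have : {x : ℝ | ¬ x ≠ 1} = {1} := by ext y; simp
    rw [this]
    exact measure_singleton 1
  -- membership in Icc-neighborhoods for interior points
  have hmemN : ∀ x ∈ Set.Ioo (0:ℝ) 1, Set.Icc (0:ℝ) 1 ∈ nhds x := fun x hx =>
    Icc_mem_nhds hx.1 hx.2
  -- generic integrability/equality transfer: if h agrees on Ioo with a
  -- continuous-on-Icc function f, then h is interval integrable with the
  -- same integral.
  have key : ∀ f h : ℝ → ℝ, ContinuousOn f (Set.Icc 0 1) →
      (∀ x ∈ Set.Ioo (0:ℝ) 1, h x = f x) →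
      IntervalIntegrable h volume 0 1 ∧
        (∫ x in (0:ℝ)..1, h x) = ∫ x in (0:ℝ)..1, f x := by
    intro f h hf hfh
    have hfI : ContinuousOn f (Set.uIcc 0 1) := by
      rwa [Set.uIcc_of_le (zero_le_one)]
    have hfi : IntervalIntegrable f volume 0 1 := hfI.intervalIntegrable
    have he : ∀ᵐ x ∂(volume : Measure ℝ), x ∈ Set.uIoc (0:ℝ) 1 → h x = f x := by
      filter_upwards [h1ae] with x hx hxI
      rw [Set.uIoc_of_le (zero_le_one)] at hxI
      exact hfh x ⟨hxI.1, lt_of_le_of_ne hxI.2 hx⟩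
    have hres : f =ᵐ[volume.restrict (Set.uIoc (0:ℝ) 1)] h := by
      rw [Filter.EventuallyEq, ae_restrict_iff' measurableSet_uIoc]
      filter_upwards [he] with x hx hxm
      exact (hx hxm).symm
    exact ⟨hfi.congr_ae hres, intervalIntegral.integral_congr_ae he⟩
  set P : ℝ → ℝ := derivWithin p (Set.Icc 0 1) with hPdef
  set Q : ℝ → ℝ := derivWithin T (Set.Icc 0 1) with hQdef
  have hPc : ContDiffOn ℝ 1 P (Set.Icc 0 1) := hp.derivWithin uD (by norm_num)
  have hQc : ContDiffOn ℝ 1 Q (Set.Icc 0 1) := hT.derivWithin uD (by norm_num)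
  -- integration by parts identity for w ∈ {p, T}
  have ibp : ∀ w : ℝ → ℝ, ContDiffOn ℝ 2 w (Set.Icc 0 1) →
      (∫ x in (0:ℝ)..1, deriv (fun y => y * χ y * deriv w y) x * p x)
        = - ∫ x in (0:ℝ)..1, (x * χ x * derivWithin w (Set.Icc 0 1) x) * P x := by
    intro w hw
    set W : ℝ → ℝ := derivWithin w (Set.Icc 0 1) with hWdef
    have hWc : ContDiffOn ℝ 1 W (Set.Icc 0 1) := hw.derivWithin uD (by norm_num)
    have hFw : ContDiffOn ℝ 1 (fun y => y * χ y * W y) (Set.Icc 0 1) :=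
      (contDiffOn_id.mul hχ).mul hWc
    have hH : ContinuousOn (fun y => (y * χ y * W y) * p y) (Set.Icc 0 1) :=
      hFw.continuousOn.mul hp.continuousOn
    have heq1 : ∀ x ∈ Set.Ioo (0:ℝ) 1,
        (fun y => y * χ y * deriv w y) =ᶠ[nhds x] (fun y => y * χ y * W y) := by
      intro x hx
      filter_upwards [isOpen_Ioo.mem_nhds hx] with y hy
      rw [hWdef, derivWithin_of_mem_nhds (hmemN y hy)]
    have hder : ∀ x ∈ Set.Ioo (0:ℝ) 1,
        HasDerivAt (fun y => (y * χ y * W y) * p y)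
          (deriv (fun y => y * χ y * deriv w y) x * p x + (x * χ x * W x) * P x) x := by
      intro x hx
      have hN := hmemN x hx
      have hFdiff : DifferentiableAt ℝ (fun y => y * χ y * W y) x :=
        (hFw.contDiffAt hN).differentiableAt (by norm_num)
      have hpdiff : DifferentiableAt ℝ p x :=
        (hp.contDiffAt hN).differentiableAt (by norm_num)
      have h1 : HasDerivAt (fun y => y * χ y * W y)
          (deriv (fun y => y * χ y * deriv w y) x) x := by
        rw [(heq1 x hx).deriv_eq]
        exact hFdiff.hasDerivAt
      have h2 : HasDerivAt p (P x) x := by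
        rw [hPdef, derivWithin_of_mem_nhds hN]
        exact hpdiff.hasDerivAt
      exact h1.mul h2
    have hDWcont : ContinuousOn
        (derivWithin (fun y => y * χ y * W y) (Set.Icc 0 1)) (Set.Icc 0 1) :=
      hFw.continuousOn_derivWithin uD le_rfl
    have hEqD : ∀ x ∈ Set.Ioo (0:ℝ) 1,
        deriv (fun y => y * χ y * deriv w y) x
          = derivWithin (fun y => y * χ y * W y) (Set.Icc 0 1) x := by
      intro x hx
      rw [derivWithin_of_mem_nhds (hmemN x hx), (heq1 x hx).deriv_eq]
    -- interval integrability of the two pieces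
    have hAint : IntervalIntegrable
        (fun x => deriv (fun y => y * χ y * deriv w y) x * p x) volume 0 1 :=
      (key (fun x => derivWithin (fun y => y * χ y * W y) (Set.Icc 0 1) x * p x)
        (fun x => deriv (fun y => y * χ y * deriv w y) x * p x)
        (hDWcont.mul hp.continuousOn)
        (fun x hx => by
          show deriv (fun y => y * χ y * deriv w y) x * p x
            = derivWithin (fun y => y * χ y * W y) (Set.Icc 0 1) x * p x
          rw [hEqD x hx])).1
    have hBcont : ContinuousOn (fun x => (x * χ x * W x) * P x) (Set.Icc 0 1) :=
      hFw.continuousOn.mul hPc.continuousOn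
    have hBint : IntervalIntegrable (fun x => (x * χ x * W x) * P x) volume 0 1 := by
      apply ContinuousOn.intervalIntegrable
      rwa [Set.uIcc_of_le (zero_le_one)]
    have hfint : IntervalIntegrable
        (fun x => deriv (fun y => y * χ y * deriv w y) x * p x + (x * χ x * W x) * P x)
        volume 0 1 := hAint.add hBint
    have hFTC := intervalIntegral.integral_eq_sub_of_hasDeriv_right_of_le
      (zero_le_one) hH (fun x hx => (hder x hx).hasDerivWithinAt) hfint
    have hend : ((1:ℝ) * χ 1 * W 1) * p 1 - ((0:ℝ) * χ 0 * W 0) * p 0 = 0 := by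
      rw [hp1]; ring
    rw [intervalIntegral.integral_add hAint hBint] at hFTC
    have : (∫ x in (0:ℝ)..1, deriv (fun y => y * χ y * deriv w y) x * p x)
        + (∫ x in (0:ℝ)..1, (x * χ x * W x) * P x) = 0 := by
      rw [hFTC]; exact hend
    linarith
  have ibpP := ibp p hp
  have ibpT := ibp T hT
  -- split the tested equation into integrals
  have hApInt : IntervalIntegrable
      (fun x => deriv (fun y => y * χ y * deriv p y) x * p x) volume 0 1 := by
    have hFp : ContDiffOn ℝ 1 (fun y => y * χ y * P y) (Set.Icc 0 1) :=
      (contDiffOn_id.mul hχ).mul hPc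
    have heq1 : ∀ x ∈ Set.Ioo (0:ℝ) 1,
        (fun y => y * χ y * deriv p y) =ᶠ[nhds x] (fun y => y * χ y * P y) := by
      intro x hx
      filter_upwards [isOpen_Ioo.mem_nhds hx] with y hy
      rw [hPdef, derivWithin_of_mem_nhds (hmemN y hy)]
    exact (key (fun x => derivWithin (fun y => y * χ y * P y) (Set.Icc 0 1) x * p x)
      (fun x => deriv (fun y => y * χ y * deriv p y) x * p x)
      ((hFp.continuousOn_derivWithin uD le_rfl).mul hp.continuousOn)
      (fun x hx => by
        show deriv (fun y => y * χ y * deriv p y) x * p x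
          = derivWithin (fun y => y * χ y * P y) (Set.Icc 0 1) x * p x
        rw [derivWithin_of_mem_nhds (hmemN x hx), (heq1 x hx).deriv_eq])).1
  have hIaInt : IntervalIntegrable (fun x => α⁻¹ * (p x ^ 2 * x)) volume 0 1 := by
    apply ContinuousOn.intervalIntegrable
    rw [Set.uIcc_of_le (zero_le_one)]
    exact (continuousOn_const.mul (((hp.continuousOn.pow 2)).mul continuousOn_id))
  have hIcInt : IntervalIntegrable (fun x => g x * x * p x) volume 0 1 := by
    apply ContinuousOn.intervalIntegrable
    rw [Set.uIcc_of_le (zero_le_one)]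
    exact (hg.mul continuousOn_id).mul hp.continuousOn
  have hsplit : (∫ x in (0:ℝ)..1, deriv (fun y => y * χ y * deriv T y) x * p x)
      = α⁻¹ * (∫ x in (0:ℝ)..1, p x ^ 2 * x)
        - (∫ x in (0:ℝ)..1, deriv (fun y => y * χ y * deriv p y) x * p x)
        + ∫ x in (0:ℝ)..1, g x * x * p x := by
    have hcong : Set.EqOn (fun x => deriv (fun y => y * χ y * deriv T y) x * p x)
        (fun x => α⁻¹ * (p x ^ 2 * x)
          - deriv (fun y => y * χ y * deriv p y) x * p x + g x * x * p x)
        (Set.uIcc (0:ℝ) 1) := by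
      rw [Set.uIcc_of_le (zero_le_one)]
      intro x hx
      have h2 : deriv (fun y => y * χ y * deriv T y) x
          = α⁻¹ * p x * x - deriv (fun y => y * χ y * deriv p y) x + g x * x := by
        linarith [heq x hx]
      simp only [h2]; ring
    rw [intervalIntegral.integral_congr hcong,
      intervalIntegral.integral_add (hIaInt.sub hApInt) hIcInt,
      intervalIntegral.integral_sub hIaInt hApInt,
      intervalIntegral.integral_const_mul]
  -- name the scalar quantities
  set A : ℝ := ∫ x in (0:ℝ)..1, p x ^ 2 * x with hA
  set B : ℝ := ∫ x in (0:ℝ)..1, (x * χ x * P x) * P x with hB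
  set E : ℝ := ∫ x in (0:ℝ)..1, (x * χ x * Q x) * P x with hE
  set Gg : ℝ := ∫ x in (0:ℝ)..1, g x * x * p x with hGg
  set C : ℝ := ∫ x in (0:ℝ)..1, x * χ x * Q x ^ 2 with hC
  set D : ℝ := ∫ x in (0:ℝ)..1, g x ^ 2 * x with hD
  have hid : -E = α⁻¹ * A + B + Gg := by
    have := hsplit
    rw [ibpT, ibpP] at this
    linarith
  -- nonnegativity of B
  have hB0 : 0 ≤ B := by
    apply intervalIntegral.integral_nonneg (zero_le_one)
    intro x hx
    have hx0 : (0:ℝ) ≤ x := hx.1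
    have hχx : (0:ℝ) ≤ χ x := le_trans hc.le (hχc x hx)
    nlinarith [mul_nonneg (mul_nonneg hx0 hχx) (sq_nonneg (P x))]
  -- Young's inequality for the cross term
  have hin1 : -E ≤ 2⁻¹ * C + 2⁻¹ * B := by
    have hCint : IntervalIntegrable (fun x => x * χ x * Q x ^ 2) volume 0 1 := by
      apply ContinuousOn.intervalIntegrable
      rw [Set.uIcc_of_le (zero_le_one)]
      exact (continuousOn_id.mul hχ.continuousOn).mul (hQc.continuousOn.pow 2)
    have hBint2 : IntervalIntegrable (fun x => (x * χ x * P x) * P x) volume 0 1 := by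
      apply ContinuousOn.intervalIntegrable
      rw [Set.uIcc_of_le (zero_le_one)]
      exact (((contDiffOn_id.mul hχ).mul hPc).continuousOn).mul hPc.continuousOn
    have hEint : IntervalIntegrable (fun x => (x * χ x * Q x) * P x) volume 0 1 := by
      apply ContinuousOn.intervalIntegrable
      rw [Set.uIcc_of_le (zero_le_one)]
      exact (((contDiffOn_id.mul hχ).mul hQc).continuousOn).mul hPc.continuousOn
    have hEnegint : IntervalIntegrable (fun x => -((x * χ x * Q x) * P x)) volume 0 1 := by
      apply ContinuousOn.intervalIntegrable
      rw [Set.uIcc_of_le (zero_le_one)]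
      exact ((((contDiffOn_id.mul hχ).mul hQc).continuousOn).mul hPc.continuousOn).neg
    have hmono := intervalIntegral.integral_mono_on (μ := volume) (zero_le_one)
      hEnegint (((hCint.const_mul 2⁻¹)).add (hBint2.const_mul 2⁻¹))
      (fun x hx => by
        have hx0 : (0:ℝ) ≤ x := hx.1
        have hχx : (0:ℝ) ≤ χ x := le_trans hc.le (hχc x hx)
        show -((x * χ x * Q x) * P x)
          ≤ 2⁻¹ * (x * χ x * Q x ^ 2) + 2⁻¹ * ((x * χ x * P x) * P x)
        nlinarith [mul_nonneg (mul_nonneg hx0 hχx) (sq_nonneg (Q x + P x))])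
    rw [intervalIntegral.integral_neg,
      intervalIntegral.integral_add (hCint.const_mul 2⁻¹) (hBint2.const_mul 2⁻¹),
      intervalIntegral.integral_const_mul, intervalIntegral.integral_const_mul] at hmono
    exact hmono
  -- Young's inequality for the source term
  have hin2 : -Gg ≤ (α / 2) * D + (α⁻¹ / 2) * A := by
    have hDint : IntervalIntegrable (fun x => g x ^ 2 * x) volume 0 1 := by
      apply ContinuousOn.intervalIntegrable
      rw [Set.uIcc_of_le (zero_le_one)]
      exact (hg.pow 2).mul continuousOn_id
    have hAint2 : IntervalIntegrable (fun x => p x ^ 2 * x) volume 0 1 := by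
      apply ContinuousOn.intervalIntegrable
      rw [Set.uIcc_of_le (zero_le_one)]
      exact (hp.continuousOn.pow 2).mul continuousOn_id
    have hGnegint : IntervalIntegrable (fun x => -(g x * x * p x)) volume 0 1 := by
      apply ContinuousOn.intervalIntegrable
      rw [Set.uIcc_of_le (zero_le_one)]
      exact ((hg.mul continuousOn_id).mul hp.continuousOn).neg
    have hmono := intervalIntegral.integral_mono_on (μ := volume) (zero_le_one)
      hGnegint ((hDint.const_mul (α / 2)).add (hAint2.const_mul (α⁻¹ / 2)))
      (fun x hx => by
        have hx0 : (0:ℝ) ≤ x := hx.1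
        have hpos : (0:ℝ) < 2 * α := by linarith
        show -(g x * x * p x) ≤ (α / 2) * (g x ^ 2 * x) + (α⁻¹ / 2) * (p x ^ 2 * x)
        rw [show (α / 2) * (g x ^ 2 * x) + (α⁻¹ / 2) * (p x ^ 2 * x)
            = (α ^ 2 * (g x ^ 2 * x) + p x ^ 2 * x) / (2 * α) from by
          field_simp, le_div_iff₀ hpos]
        nlinarith [mul_nonneg hx0 (sq_nonneg (α * g x + p x))])
    rw [intervalIntegral.integral_neg,
      intervalIntegral.integral_add (hDint.const_mul (α / 2)) (hAint2.const_mul (α⁻¹ / 2)),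
      intervalIntegral.integral_const_mul, intervalIntegral.integral_const_mul] at hmono
    exact hmono
  -- combine: α⁻¹ A ≤ C + α D
  have hfin : α⁻¹ * A ≤ C + α * D := by linarith
  -- rewrite the goal integrals
  have hu2 : (∫ x in (0:ℝ)..1, (u x) ^ 2 * x) = α⁻¹ ^ 2 * A := by
    have hcong : Set.EqOn (fun x => (u x) ^ 2 * x)
        (fun x => α⁻¹ ^ 2 * (p x ^ 2 * x)) (Set.uIcc (0:ℝ) 1) := by
      intro x _
      simp only [hu x]; ring
    rw [intervalIntegral.integral_congr hcong, intervalIntegral.integral_const_mul]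
  have hC' : (∫ x in (0:ℝ)..1, χ x * (deriv T x) ^ 2 * x) = C := by
    exact (key (fun x => x * χ x * Q x ^ 2) (fun x => χ x * (deriv T x) ^ 2 * x)
      ((continuousOn_id.mul hχ.continuousOn).mul (hQc.continuousOn.pow 2))
      (fun x hx => by
        show χ x * (deriv T x) ^ 2 * x = x * χ x * Q x ^ 2
        rw [show deriv T x = Q x by rw [hQdef, derivWithin_of_mem_nhds (hmemN x hx)]]
        ring)).2
  rw [hu2, hC']
  apply Real.sqrt_le_sqrt
  -- final algebra: α⁻² A ≤ D + α⁻¹ C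
  have hmul := mul_le_mul_of_nonneg_left hfin (inv_nonneg.2 hα.le)
  have hfs : α⁻¹ * (C + α * D) = α⁻¹ * C + D := by
    field_simp
  rw [hfs] at hmul
  have : α⁻¹ ^ 2 * A = α⁻¹ * (α⁻¹ * A) := by ring
  rw [this]
  linarith
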